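/- For the Kimura metric ds² = (r²/b) dt² - (1/(r²b²)) dr² - r² dθ² - r² sin²θ dφ² (with b a nonzero constant) on the region r > 0, 0 < θ < π, the vector field ξ = (r²/2) ∂_r is a proper conformal Killing vector with conformal factor φ(r) = r, i.e., £_ξ g = r · g. -/

import Mathlib

noncomputable section

/-- Points of the 4-dimensional coordinate domain. -/
abbrev Pt : Type := Fin 4 → ℝ

/-- A (real) vector field, given by its coordinate components. -/
abbrev Vec : Type := Pt → Fin 4 → ℝ

/-- Directional derivative of a scalar along a vector field (Lie derivative of a function). -/
def dd (X : Vec) (f : Pt → ℝ) (p : Pt) : ℝ := fderiv ℝ f p (X p)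

/-- Coordinate partial derivative `∂_μ`. -/
def pd (μ : Fin 4) (f : Pt → ℝ) (p : Pt) : ℝ := fderiv ℝ f p (Pi.single μ 1)

/-- Lie bracket of vector fields, `[X,Y]^i = X^ν ∂_ν Y^i - Y^ν ∂_ν X^i`. -/
def lb (X Y : Vec) : Vec := fun p i =>
  fderiv ℝ (fun q => Y q i) p (X p) - fderiv ℝ (fun q => X q i) p (Y p)

/-- Coordinate components of the Lie derivative of a metric:
`(£_ξ g)_{μν} = ξ^σ ∂_σ g_{μν} + g_{σν} ∂_μ ξ^σ + g_{μσ} ∂_ν ξ^σ`. -/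
def lieDg (ξ : Vec) (g : Pt → Fin 4 → Fin 4 → ℝ) (p : Pt) (μ ν : Fin 4) : ℝ :=
  (∑ σ : Fin 4, ξ p σ * pd σ (fun q => g q μ ν) p)
  + (∑ σ : Fin 4, g p σ ν * pd μ (fun q => ξ q σ) p)
  + (∑ σ : Fin 4, g p μ σ * pd ν (fun q => ξ q σ) p)

/-- Pointwise value `g(X,Y)` of the metric on two vector fields. -/
def gVal (g : Pt → Fin 4 → Fin 4 → ℝ) (X Y : Vec) (p : Pt) : ℝ :=
  ∑ i : Fin 4, ∑ j : Fin 4, g p i j * X p i * Y p j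

/-- The Kimura metric in coordinates (t,r,θ,φ) = (p 0, p 1, p 2, p 3):
`ds² = (r²/b) dt² - (1/(r²b²)) dr² - r² dθ² - r² sin²θ dφ²`. -/
def kimura (b : ℝ) : Pt → Fin 4 → Fin 4 → ℝ := fun p =>
  ![![p 1 ^ 2 / b, 0, 0, 0],
    ![0, -(1 / (p 1 ^ 2 * b ^ 2)), 0, 0],
    ![0, 0, -(p 1 ^ 2), 0],
    ![0, 0, 0, -(p 1 ^ 2 * Real.sin (p 2) ^ 2)]]


lemma pd_proj_comp (f : ℝ → ℝ) (p : Pt) (σ i : Fin 4) (hf : DifferentiableAt ℝ f (p i)) :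
    pd σ (fun q => f (q i)) p = deriv f (p i) * (Pi.single σ 1 : Pt) i := by
  have h := (hf.hasDerivAt.hasFDerivAt.comp p
    ((ContinuousLinearMap.proj (R := ℝ) (φ := fun _ : Fin 4 => ℝ) i).hasFDerivAt))
  unfold pd
  rw [show (fun q : Pt => f (q i)) = f ∘ ⇑(ContinuousLinearMap.proj (R := ℝ) (φ := fun _ : Fin 4 => ℝ) i) from rfl, h.fderiv]
  simp [mul_comm]

lemma pd_proj_comp2 (f h : ℝ → ℝ) (p : Pt) (σ : Fin 4) (i j : Fin 4)
    (hf : DifferentiableAt ℝ f (p i)) (hh : DifferentiableAt ℝ h (p j)) :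
    pd σ (fun q => f (q i) * h (q j)) p
      = deriv f (p i) * (Pi.single σ 1 : Pt) i * h (p j)
        + f (p i) * (deriv h (p j) * (Pi.single σ 1 : Pt) j) := by
  have h1 := (hf.hasDerivAt.hasFDerivAt.comp p
    ((ContinuousLinearMap.proj (R := ℝ) (φ := fun _ : Fin 4 => ℝ) i).hasFDerivAt))
  have h2 := (hh.hasDerivAt.hasFDerivAt.comp p
    ((ContinuousLinearMap.proj (R := ℝ) (φ := fun _ : Fin 4 => ℝ) j).hasFDerivAt))
  have hm := h1.mul h2
  unfold pd
  rw [show (fun q : Pt => f (q i) * h (q j)) = (f ∘ ⇑(ContinuousLinearMap.proj (R := ℝ) (φ := fun _ : Fin 4 => ℝ) i)) * (h ∘ ⇑(ContinuousLinearMap.proj (R := ℝ) (φ := fun _ : Fin 4 => ℝ) j)) from rfl, hm.fderiv]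
  simp [mul_comm, mul_left_comm]
  ring

lemma pd_zero (σ : Fin 4) (p : Pt) : pd σ (fun _ => (0:ℝ)) p = 0 := by simp [pd]

lemma pd_neg (f : Pt → ℝ) (σ : Fin 4) (p : Pt) :
    pd σ (fun q => -(f q)) p = -(pd σ f p) := by simp [pd, fderiv_neg]

lemma pd_g00 (b : ℝ) (σ : Fin 4) (p : Pt) :
    pd σ (fun q => q 1 ^ 2 / b) p = 2 * p 1 / b * (Pi.single σ 1 : Pt) 1 := by
  have := pd_proj_comp (fun x => x ^ 2 / b) p σ 1 (by fun_prop)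
  simpa [deriv_div_const, mul_comm, mul_div_assoc, mul_left_comm] using this

lemma pd_xi (σ : Fin 4) (p : Pt) :
    pd σ (fun q => q 1 ^ 2 / 2) p = p 1 * (Pi.single σ 1 : Pt) 1 := by
  have := pd_proj_comp (fun x => x ^ 2 / 2) p σ 1 (by fun_prop)
  rw [this]
  norm_num [deriv_div_const]

lemma pd_g22 (σ : Fin 4) (p : Pt) :
    pd σ (fun q => -(q 1 ^ 2)) p = -(2 * p 1) * (Pi.single σ 1 : Pt) 1 := by
  have := pd_proj_comp (fun x => -(x ^ 2)) p σ 1 (by fun_prop)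
  simpa [mul_comm] using this

lemma pd_g11 (b : ℝ) (hb : b ≠ 0) (σ : Fin 4) (p : Pt) (hx : p 1 ≠ 0) :
    pd σ (fun q => -(1 / (q 1 ^ 2 * b ^ 2))) p
      = 2 / (p 1 ^ 3 * b ^ 2) * (Pi.single σ 1 : Pt) 1 := by
  have hne : p 1 ^ 2 * b ^ 2 ≠ 0 := mul_ne_zero (pow_ne_zero _ hx) (pow_ne_zero _ hb)
  have H : HasDerivAt (fun x : ℝ => -(1 / (x ^ 2 * b ^ 2))) (2 / (p 1 ^ 3 * b ^ 2)) (p 1) := by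
    have h1 : HasDerivAt (fun x : ℝ => x ^ 2 * b ^ 2) (2 * p 1 * b ^ 2) (p 1) := by
      simpa using (hasDerivAt_pow 2 (p 1)).mul_const (b ^ 2)
    have h2 := (h1.inv hne).neg
    have h3 : (fun x : ℝ => -(1 / (x ^ 2 * b ^ 2))) = -(fun x => x ^ 2 * b ^ 2)⁻¹ := by
      funext x; simp [one_div]
    rw [h3]
    refine h2.congr_deriv ?_
    rw [neg_div, neg_neg, div_eq_div_iff (pow_ne_zero _ hne)
      (mul_ne_zero (pow_ne_zero _ hx) (pow_ne_zero _ hb))]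
    ring
  have hd : DifferentiableAt ℝ (fun x : ℝ => -(1 / (x ^ 2 * b ^ 2))) (p 1) := H.differentiableAt
  have := pd_proj_comp (fun x => -(1 / (x ^ 2 * b ^ 2))) p σ 1 hd
  rw [this, H.deriv]

lemma pd_g33 (σ : Fin 4) (p : Pt) :
    pd σ (fun q => -(q 1 ^ 2 * Real.sin (q 2) ^ 2)) p
      = -(2 * p 1 * (Pi.single σ 1 : Pt) 1 * Real.sin (p 2) ^ 2
          + p 1 ^ 2 * (2 * Real.sin (p 2) * Real.cos (p 2) * (Pi.single σ 1 : Pt) 2)) := by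
  have h := pd_neg (fun q => q 1 ^ 2 * Real.sin (q 2) ^ 2) σ p
  rw [h]
  have := pd_proj_comp2 (fun x => x ^ 2) (fun x => Real.sin x ^ 2) p σ 1 2
    (by fun_prop) (by fun_prop)
  rw [this]
  have hds : deriv (fun x => Real.sin x ^ 2) (p 2) = 2 * Real.sin (p 2) * Real.cos (p 2) := by
    have : HasDerivAt (fun x => Real.sin x ^ 2) (2 * Real.sin (p 2) ^ 1 * Real.cos (p 2)) (p 2) :=
      (Real.hasDerivAt_sin (p 2)).pow 2
    simpa using this.deriv
  rw [hds]
  simp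

/-- `ξ = (r²/2) ∂_r` is a proper conformal Killing vector of the Kimura metric
with conformal factor r: £_ξ g = r g on {r>0, 0<θ<π}. -/
theorem kimura_proper_CKV_radial (b : ℝ) (hb : b ≠ 0) :
    ∀ p : Pt, 0 < p 1 → 0 < p 2 → p 2 < Real.pi → ∀ μ ν : Fin 4,
      lieDg (fun p => ![0, p 1 ^ 2 / 2, 0, 0]) (kimura b) p μ ν
        = p 1 * kimura b p μ ν := by
  intro p hr _ _ μ ν
  have hx : p 1 ≠ 0 := ne_of_gt hr
  fin_cases μ <;> fin_cases ν <;>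
    (simp only [lieDg, kimura, Fin.sum_univ_four, Fin.isValue,
      Matrix.cons_val_zero, Matrix.cons_val_one, Matrix.head_cons,
      Matrix.cons_val_two, Matrix.tail_cons, Matrix.cons_val_three,
      Fin.zero_eta, Fin.mk_one, Fin.reduceFinMk,
      pd_zero, pd_g00 b, pd_g11 b hb (p := p) (hx := hx), pd_g22, pd_g33, pd_xi]
     simp [Pi.single_apply]
     try field_simp
     try ring)
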